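/- Let L be a finite-dimensional vector space with dual L*, let Δ : L → L ⊗ L be a linear map with dual bracket [-,-]_* = Δ* on L*, and let α, β : L → L be linear maps with duals α*, β*. Then (L*, [-,-]_*, α*, β*) is a BiHom-Lie algebra if and only if (L, Δ, α, β) is a BiHom-Lie coalgebra. -/

import Mathlib

set_option maxSynthPendingDepth 2

open TensorProduct

variable {K : Type} [Field K] {L : Type} [AddCommGroup L] [Module K L]
variable {V : Type} [AddCommGroup V] [Module K V]

/-- The flip map on `L ⊗ L`. -/
noncomputable def tau (K L : Type) [Field K] [AddCommGroup L] [Module K L] :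
    L ⊗[K] L →ₗ[K] L ⊗[K] L := (TensorProduct.comm K L L).toLinearMap

/-- The cyclic permutation `x ⊗ (y ⊗ z) ↦ z ⊗ (x ⊗ y)` on `L ⊗ (L ⊗ L)`. -/
noncomputable def cyc (K L : Type) [Field K] [AddCommGroup L] [Module K L] :
    L ⊗[K] (L ⊗[K] L) →ₗ[K] L ⊗[K] (L ⊗[K] L) :=
  (TensorProduct.comm K (L ⊗[K] L) L).toLinearMap ∘ₗ
    (TensorProduct.assoc K L L L).symm.toLinearMap

/-- The pairing `⟨f ⊗ g, -⟩ : L ⊗ L → K`. -/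
noncomputable def pair (f g : Module.Dual K L) : L ⊗[K] L →ₗ[K] K :=
  TensorProduct.lift ((LinearMap.mul K K).compl₁₂ f g)

/-- The transpose (dual) of an endomorphism. -/
noncomputable def tpose (f : L →ₗ[K] L) : Module.Dual K L →ₗ[K] Module.Dual K L :=
  Module.Dual.transpose (R := K) f

/-- The dual representation map `ρ*` with `⟨ρ*(x)v*, v⟩ = −⟨v*, ρ(x)v⟩`. -/
noncomputable def negDualRep (ρ : L →ₗ[K] V →ₗ[K] V) :
    L →ₗ[K] Module.Dual K V →ₗ[K] Module.Dual K V :=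
  -(LinearMap.comp (Module.Dual.transpose (R := K)) ρ :
      L →ₗ[K] Module.Dual K V →ₗ[K] Module.Dual K V)

/-- BiHom-Lie algebra conditions. -/
def IsBiHomLie (b : L →ₗ[K] L →ₗ[K] L) (α β : L →ₗ[K] L) : Prop :=
  (∀ x, α (β x) = β (α x)) ∧
  (∀ x y, α (b x y) = b (α x) (α y)) ∧
  (∀ x y, β (b x y) = b (β x) (β y)) ∧
  (∀ x y, b (β x) (α y) = - b (β y) (α x)) ∧
  (∀ x y z, b (β (β x)) (b (β y) (α z)) + b (β (β y)) (b (β z) (α x)) +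
      b (β (β z)) (b (β x) (α y)) = 0)

/-- The map `(id ⊗ β ⊗ α)(β² ⊗ Δ) ∘ Δ`. -/
noncomputable def coA (Δ : L →ₗ[K] L ⊗[K] L) (α β : L →ₗ[K] L) :
    L →ₗ[K] L ⊗[K] (L ⊗[K] L) :=
  TensorProduct.map LinearMap.id (TensorProduct.map β α) ∘ₗ
    TensorProduct.map (β ∘ₗ β) Δ ∘ₗ Δ

/-- BiHom-Lie coalgebra conditions. -/
def IsBiHomLieCoalg (Δ : L →ₗ[K] L ⊗[K] L) (α β : L →ₗ[K] L) : Prop :=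
  (∀ x, α (β x) = β (α x)) ∧
  Δ ∘ₗ α = TensorProduct.map α α ∘ₗ Δ ∧
  Δ ∘ₗ β = TensorProduct.map β β ∘ₗ Δ ∧
  TensorProduct.map β α ∘ₗ Δ + tau K L ∘ₗ TensorProduct.map β α ∘ₗ Δ = 0 ∧
  coA Δ α β + cyc K L ∘ₗ coA Δ α β + cyc K L ∘ₗ cyc K L ∘ₗ coA Δ α β = 0

/-- The map `(id ⊗ Δ) ∘ Δ`. -/
noncomputable def coA0 (Δ : L →ₗ[K] L ⊗[K] L) : L →ₗ[K] L ⊗[K] (L ⊗[K] L) :=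
  TensorProduct.map LinearMap.id Δ ∘ₗ Δ

/-- Lie coalgebra conditions. -/
def IsLieCoalg (Δ : L →ₗ[K] L ⊗[K] L) : Prop :=
  Δ + tau K L ∘ₗ Δ = 0 ∧
  coA0 Δ + cyc K L ∘ₗ coA0 Δ + cyc K L ∘ₗ cyc K L ∘ₗ coA0 Δ = 0

/-- Lie algebra conditions on a bilinear bracket. -/
def IsLieAlg (b : L →ₗ[K] L →ₗ[K] L) : Prop :=
  (∀ x y, b x y = - b y x) ∧
  (∀ x y z, b x (b y z) + b y (b z x) + b z (b x y) = 0)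

/-- The Lie bialgebra 1-cocycle compatibility condition. -/
def IsLieBialgCocycle (b : L →ₗ[K] L →ₗ[K] L) (Δ : L →ₗ[K] L ⊗[K] L) : Prop :=
  ∀ x y, Δ (b x y) =
    TensorProduct.map (b x) LinearMap.id (Δ y) + TensorProduct.map LinearMap.id (b x) (Δ y) -
    TensorProduct.map (b y) LinearMap.id (Δ x) - TensorProduct.map LinearMap.id (b y) (Δ x)

/-- Nijenhuis BiHom-Lie algebra conditions. -/
def IsNijBiHomLie (b : L →ₗ[K] L →ₗ[K] L) (N α β : L →ₗ[K] L) : Prop :=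
  IsBiHomLie b α β ∧ (∀ x, α (N x) = N (α x)) ∧ (∀ x, β (N x) = N (β x)) ∧
  (∀ x y, b (N x) (N y) = N (b (N x) y + b x (N y)) - N (N (b x y)))

/-- Nijenhuis BiHom-Lie coalgebra conditions. -/
def IsNijBiHomLieCoalg (Δ : L →ₗ[K] L ⊗[K] L) (N α β : L →ₗ[K] L) : Prop :=
  IsBiHomLieCoalg Δ α β ∧ (∀ x, α (N x) = N (α x)) ∧ (∀ x, β (N x) = N (β x)) ∧
  TensorProduct.map N N ∘ₗ Δ + Δ ∘ₗ (N ∘ₗ N) =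
    TensorProduct.map N LinearMap.id ∘ₗ Δ ∘ₗ N + TensorProduct.map LinearMap.id N ∘ₗ Δ ∘ₗ N

/-- Representation of a BiHom-Lie algebra. -/
def IsBiHomRep (b : L →ₗ[K] L →ₗ[K] L) (α β : L →ₗ[K] L)
    (ρ : L →ₗ[K] V →ₗ[K] V) (p q : V →ₗ[K] V) : Prop :=
  (∀ v, p (q v) = q (p v)) ∧
  (∀ x v, p (ρ x v) = ρ (α x) (p v)) ∧
  (∀ x v, q (ρ x v) = ρ (β x) (q v)) ∧
  (∀ x y v, ρ (b (β x) y) (q v) = ρ (α (β x)) (ρ y v) - ρ (β y) (ρ (α x) v))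

/-- Representation of a Nijenhuis BiHom-Lie algebra. -/
def IsNijBiHomRep (b : L →ₗ[K] L →ₗ[K] L) (N α β : L →ₗ[K] L)
    (ρ : L →ₗ[K] V →ₗ[K] V) (η p q : V →ₗ[K] V) : Prop :=
  IsBiHomRep b α β ρ p q ∧
  (∀ v, η (p v) = p (η v)) ∧ (∀ v, η (q v) = q (η v)) ∧
  (∀ x v, ρ (N x) (η v) = η (ρ (N x) v) + η (ρ x (η v)) - η (η (ρ x v)))

/-- Differential Lie algebra of weight `l`. -/
def IsDiffLie (b : L →ₗ[K] L →ₗ[K] L) (d : L →ₗ[K] L) (l : K) : Prop :=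
  IsLieAlg b ∧ ∀ x y, d (b x y) = b (d x) y + b x (d y) + l • b (d x) (d y)

/-- Lie algebra representation. -/
def IsLieRep (b : L →ₗ[K] L →ₗ[K] L) (ρ : L →ₗ[K] V →ₗ[K] V) : Prop :=
  ∀ x y v, ρ (b x y) v = ρ x (ρ y v) - ρ y (ρ x v)

/-- Representation of a differential Lie algebra of weight `l`. -/
def IsDiffLieRep (b : L →ₗ[K] L →ₗ[K] L) (d : L →ₗ[K] L) (l : K)
    (ρ : L →ₗ[K] V →ₗ[K] V) (ξ : V →ₗ[K] V) : Prop :=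
  IsLieRep b ρ ∧ ∀ x v, ξ (ρ x v) = ρ (d x) v + ρ x (ξ v) + l • ρ (d x) (ξ v)

/-- Semidirect-product bracket
`[(x,a),(y,b)] = ([x,y], ρ(x)b − ρ(g y)(h a))`. -/
noncomputable def sdBracket (b : L →ₗ[K] L →ₗ[K] L) (ρ : L →ₗ[K] V →ₗ[K] V)
    (g : L →ₗ[K] L) (h : V →ₗ[K] V) : (L × V) →ₗ[K] (L × V) →ₗ[K] L × V :=
  (b.compl₁₂ (LinearMap.fst K L V) (LinearMap.fst K L V)).compr₂ (LinearMap.inl K L V) +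
  ((ρ.compl₁₂ (LinearMap.fst K L V) (LinearMap.snd K L V)) -
    ((ρ ∘ₗ g).compl₁₂ (LinearMap.fst K L V) (h ∘ₗ LinearMap.snd K L V)).flip).compr₂
      (LinearMap.inr K L V)

/-- Matched-pair bracket
`[(x,a),(y,b)] = ([x,y] + h(a)y − h(b)x, [a,b]_V + ρ(x)b − ρ(y)a)`. -/
noncomputable def mpBracket (b : L →ₗ[K] L →ₗ[K] L) (bV : V →ₗ[K] V →ₗ[K] V)
    (ρ : L →ₗ[K] V →ₗ[K] V) (h : V →ₗ[K] L →ₗ[K] L) :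
    (L × V) →ₗ[K] (L × V) →ₗ[K] L × V :=
  (b.compl₁₂ (LinearMap.fst K L V) (LinearMap.fst K L V) +
    h.compl₁₂ (LinearMap.snd K L V) (LinearMap.fst K L V) -
    (h.compl₁₂ (LinearMap.snd K L V) (LinearMap.fst K L V)).flip).compr₂
      (LinearMap.inl K L V) +
  (bV.compl₁₂ (LinearMap.snd K L V) (LinearMap.snd K L V) +
    ρ.compl₁₂ (LinearMap.fst K L V) (LinearMap.snd K L V) -
    (ρ.compl₁₂ (LinearMap.fst K L V) (LinearMap.snd K L V)).flip).compr₂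
      (LinearMap.inr K L V)


section DualityLemmas

variable {K : Type} [Field K] {L : Type} [AddCommGroup L] [Module K L]

/-- Triple pairing on `L ⊗ (L ⊗ L)`. -/
noncomputable def pair3 (f g h : Module.Dual K L) : L ⊗[K] (L ⊗[K] L) →ₗ[K] K :=
  TensorProduct.lift ((LinearMap.mul K K).compl₁₂ f (pair g h))

lemma pair_tmul (f g : Module.Dual K L) (x y : L) : pair f g (x ⊗ₜ[K] y) = f x * g y := rfl

lemma pair3_tmul (f g h : Module.Dual K L) (x : L) (s : L ⊗[K] L) :
    pair3 f g h (x ⊗ₜ[K] s) = f x * pair g h s := rfl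

lemma repr_pair {ι : Type} (b : Module.Basis ι K L) (s : L ⊗[K] L) (j k : ι) :
    (b.tensorProduct b).repr s (j, k) = pair (b.coord j) (b.coord k) s := by
  induction s using TensorProduct.induction_on with
  | zero => simp
  | tmul x y => simp [Module.Basis.tensorProduct_repr_tmul_apply, pair_tmul, mul_comm]
  | add u v hu hv => simp [hu, hv]

lemma repr_pair3 {ι : Type} (b : Module.Basis ι K L) (t : L ⊗[K] (L ⊗[K] L)) (i j k : ι) :
    (b.tensorProduct (b.tensorProduct b)).repr t (i, (j, k)) =
      pair3 (b.coord i) (b.coord j) (b.coord k) t := by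
  induction t using TensorProduct.induction_on with
  | zero => simp
  | tmul x s =>
      rw [Module.Basis.tensorProduct_repr_tmul_apply, repr_pair, pair3_tmul, Module.Basis.coord_apply,
        smul_eq_mul, mul_comm]
  | add u v hu hv => simp [hu, hv]

lemma sep1' (v w : L) (h : ∀ f : Module.Dual K L, f v = f w) : v = w := by
  rw [← sub_eq_zero]
  exact (Module.forall_dual_apply_eq_zero_iff K _).mp (fun f => by simp [h f])

lemma sep2' (t t' : L ⊗[K] L)
    (h : ∀ f g : Module.Dual K L, pair f g t = pair f g t') : t = t' := by
  let b := Module.Free.chooseBasis K L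
  refine (Module.Basis.tensorProduct b b).repr.injective (Finsupp.ext fun p => ?_)
  obtain ⟨j, k⟩ := p
  rw [repr_pair, repr_pair, h]

lemma sep3' (t t' : L ⊗[K] (L ⊗[K] L))
    (h : ∀ f g h' : Module.Dual K L, pair3 f g h' t = pair3 f g h' t') : t = t' := by
  let b := Module.Free.chooseBasis K L
  refine (Module.Basis.tensorProduct b (Module.Basis.tensorProduct b b)).repr.injective
    (Finsupp.ext fun p => ?_)
  obtain ⟨i, j, k⟩ := p
  rw [repr_pair3, repr_pair3, h]

lemma pair_map (f g : Module.Dual K L) (φ ψ : L →ₗ[K] L) (t : L ⊗[K] L) :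
    pair f g (TensorProduct.map φ ψ t) = pair (f ∘ₗ φ) (g ∘ₗ ψ) t := by
  induction t using TensorProduct.induction_on with
  | zero => simp
  | tmul x y => simp [pair_tmul]
  | add u v hu hv => simp [hu, hv]

lemma pair_tau (f g : Module.Dual K L) (t : L ⊗[K] L) :
    pair f g (tau K L t) = pair g f t := by
  induction t using TensorProduct.induction_on with
  | zero => simp
  | tmul x y => simp [tau, pair_tmul, mul_comm]
  | add u v hu hv => simp [tau] at hu hv ⊢; simp [hu, hv]

lemma pair3_map (f g h : Module.Dual K L) (φ ψ χ : L →ₗ[K] L) (t : L ⊗[K] (L ⊗[K] L)) :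
    pair3 f g h (TensorProduct.map φ (TensorProduct.map ψ χ) t) =
      pair3 (f ∘ₗ φ) (g ∘ₗ ψ) (h ∘ₗ χ) t := by
  induction t using TensorProduct.induction_on with
  | zero => simp
  | tmul x s => simp [pair3_tmul, pair_map]
  | add u v hu hv => simp [hu, hv]

lemma pair3_map2 (f g h : Module.Dual K L) (φ : L →ₗ[K] L) (D : L →ₗ[K] L ⊗[K] L)
    (t : L ⊗[K] L) :
    pair3 f g h (TensorProduct.map φ D t) = pair (f ∘ₗ φ) ((pair g h) ∘ₗ D) t := by
  induction t using TensorProduct.induction_on with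
  | zero => simp
  | tmul x y => simp [pair3_tmul, pair_tmul]
  | add u v hu hv => simp [hu, hv]

lemma pair3_cyc (f g h : Module.Dual K L) (t : L ⊗[K] (L ⊗[K] L)) :
    pair3 f g h (cyc K L t) = pair3 g h f t := by
  induction t using TensorProduct.induction_on with
  | zero => simp
  | tmul x s =>
      induction s using TensorProduct.induction_on with
      | zero => simp [TensorProduct.tmul_zero]
      | tmul y z =>
          simp only [cyc, LinearMap.coe_comp, LinearEquiv.coe_coe, Function.comp_apply,
            TensorProduct.assoc_symm_tmul, TensorProduct.comm_tmul, pair3_tmul, pair_tmul]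
          ring
      | add u v hu hv => simp only [TensorProduct.tmul_add, map_add, hu, hv]
  | add u v hu hv => simp [hu, hv]

lemma tpose_apply (φ : L →ₗ[K] L) (f : Module.Dual K L) : tpose φ f = f ∘ₗ φ := rfl

end DualityLemmas
theorem dual_biHomLie_iff_biHomLieCoalg [FiniteDimensional K L]
    (Δ : L →ₗ[K] L ⊗[K] L) (α β : L →ₗ[K] L)
    (bs : Module.Dual K L →ₗ[K] Module.Dual K L →ₗ[K] Module.Dual K L)
    (hdual : ∀ f g x, bs f g x = pair f g (Δ x)) :
    IsBiHomLie (L := Module.Dual K L) bs (tpose α) (tpose β) ↔ IsBiHomLieCoalg Δ α β := by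
  have hbs : ∀ g' h' : Module.Dual K L, bs g' h' = (pair g' h') ∘ₗ Δ :=
    fun g' h' => LinearMap.ext fun x => hdual g' h' x
  have term1 : ∀ (f g h : Module.Dual K L) (x : L),
      bs (tpose β (tpose β f)) (bs (tpose β g) (tpose α h)) x =
        pair3 f g h (coA Δ α β x) := by
    intro f g h x
    rw [hdual, hbs]
    simp only [coA, LinearMap.comp_apply]
    rw [pair3_map, pair3_map2]
    rfl
  have term : ∀ (f g h : Module.Dual K L) (x : L),
      bs (tpose β (tpose β f)) (bs (tpose β g) (tpose α h)) x +
      bs (tpose β (tpose β g)) (bs (tpose β h) (tpose α f)) x +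
      bs (tpose β (tpose β h)) (bs (tpose β f) (tpose α g)) x =
      pair3 f g h ((coA Δ α β + cyc K L ∘ₗ coA Δ α β +
        cyc K L ∘ₗ cyc K L ∘ₗ coA Δ α β) x) := by
    intro f g h x
    simp only [LinearMap.add_apply, LinearMap.comp_apply, map_add]
    rw [term1 f g h, term1 g h f, term1 h f g, pair3_cyc, pair3_cyc, pair3_cyc]
  constructor
  · rintro ⟨h1, h2, h3, h4, h5⟩
    refine ⟨?_, ?_, ?_, ?_, ?_⟩
    · intro x
      refine sep1' (K := K) _ _ fun f => ?_
      exact (LinearMap.congr_fun (h1 f) x).symm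
    · refine LinearMap.ext fun x => ?_
      simp only [LinearMap.comp_apply]
      refine sep2' (K := K) _ _ fun f g => ?_
      rw [pair_map, ← hdual, ← hdual]
      exact LinearMap.congr_fun (h2 f g) x
    · refine LinearMap.ext fun x => ?_
      simp only [LinearMap.comp_apply]
      refine sep2' (K := K) _ _ fun f g => ?_
      rw [pair_map, ← hdual, ← hdual]
      exact LinearMap.congr_fun (h3 f g) x
    · refine LinearMap.ext fun x => ?_
      simp only [LinearMap.add_apply, LinearMap.comp_apply, LinearMap.zero_apply]
      refine sep2' (K := K) _ 0 fun f g => ?_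
      rw [map_add, map_zero, pair_tau, pair_map, pair_map, ← hdual, ← hdual]
      exact add_eq_zero_iff_eq_neg.mpr (LinearMap.congr_fun (h4 f g) x)
    · refine LinearMap.ext fun x => ?_
      refine sep3' (K := K) _ _ fun f g h => ?_
      rw [LinearMap.zero_apply, map_zero, ← term f g h x]
      simpa using LinearMap.congr_fun (h5 f g h) x
  · rintro ⟨h1, h2, h3, h4, h5⟩
    have h2' : ∀ y, Δ (α y) = TensorProduct.map α α (Δ y) :=
      fun y => LinearMap.congr_fun h2 y
    have h3' : ∀ y, Δ (β y) = TensorProduct.map β β (Δ y) :=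
      fun y => LinearMap.congr_fun h3 y
    refine ⟨?_, ?_, ?_, ?_, ?_⟩
    · exact fun f => LinearMap.ext fun x => (congrArg f (h1 x)).symm
    · intro f g
      refine LinearMap.ext fun x => ?_
      simp only [tpose_apply, LinearMap.comp_apply]
      rw [hdual, hdual, h2' x, pair_map]
    · intro f g
      refine LinearMap.ext fun x => ?_
      simp only [tpose_apply, LinearMap.comp_apply]
      rw [hdual, hdual, h3' x, pair_map]
    · intro f g
      refine LinearMap.ext fun x => ?_
      simp only [tpose_apply, LinearMap.neg_apply]
      rw [hdual, hdual, ← pair_map, ← pair_map, ← pair_tau f g]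
      have h4' := LinearMap.congr_fun h4 x
      simp only [LinearMap.add_apply, LinearMap.comp_apply, LinearMap.zero_apply] at h4'
      rw [eq_neg_iff_add_eq_zero, ← map_add, h4', map_zero]
    · intro f g h
      refine LinearMap.ext fun x => ?_
      simp only [LinearMap.add_apply, LinearMap.zero_apply]
      rw [term f g h x, LinearMap.congr_fun h5 x]
      simp
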